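/- The kinetic energy expressed in extended momentum coordinates splits into task-space and null-space parts: for p ∈ ℝⁿ and π_e = J̄⁻ᵀ p, writing π_e = (π; π_ν) with π ∈ ℝᵐ and π_ν ∈ ℝⁿ⁻ᵐ, one has (1/2) pᵀ M⁻¹ p = (1/2) π_eᵀ J̄ M⁻¹ J̄ᵀ π_e = (1/2) πᵀ Λ_t⁻¹ π + (1/2) π_νᵀ Λ_ν⁻¹ π_ν, where Λ_t = (J M⁻¹ Jᵀ)⁻¹ and Λ_ν = Z M Zᵀ. -/

import Mathlib

open Matrix

lemma aux_vecMul_injective {m n : ℕ} (A : Matrix (Fin m) (Fin n) ℝ)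
    (hA : A.rank = m) : Function.Injective fun x => Matrix.vecMul x A := by
  have h : Aᵀ.rank = m := by rwa [Matrix.rank_transpose]
  have hker : LinearMap.ker Aᵀ.mulVecLin = ⊥ := by
    have h1 := (Aᵀ.mulVecLin).finrank_range_add_finrank_ker
    rw [show Module.finrank ℝ (LinearMap.range Aᵀ.mulVecLin) = m from h,
      show Module.finrank ℝ (Fin m → ℝ) = m by simp] at h1
    have : Module.finrank ℝ (LinearMap.ker Aᵀ.mulVecLin) = 0 := by omega
    exact Submodule.finrank_eq_zero.mp this
  have hinj : Function.Injective Aᵀ.mulVecLin := LinearMap.ker_eq_bot.mp hker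
  intro x y hxy
  apply hinj
  simpa [Matrix.mulVecLin_apply, Matrix.mulVec_transpose] using hxy

lemma aux_posdef {m n : ℕ} (M : Matrix (Fin n) (Fin n) ℝ)
    (A : Matrix (Fin m) (Fin n) ℝ) (hM : M.PosDef) (hA : A.rank = m) :
    (A * M * Aᵀ).PosDef := by
  have hMt : Mᵀ = M := hM.isHermitian
  refine Matrix.posDef_iff_dotProduct_mulVec.mpr ⟨?_, ?_⟩
  · show (A * M * Aᵀ)ᴴ = A * M * Aᵀ
    simp [Matrix.conjTranspose_mul, hMt, Matrix.mul_assoc]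
  · intro x hx
    have hy : Matrix.vecMul x A ≠ 0 := by
      intro h
      exact hx (aux_vecMul_injective A hA (by simpa using h))
    have h2 := hM.dotProduct_mulVec_pos hy
    have key : x ⬝ᵥ (A * M * Aᵀ) *ᵥ x = (x ᵥ* A) ⬝ᵥ M *ᵥ (x ᵥ* A) := by
      rw [← Matrix.mulVec_mulVec, ← Matrix.mulVec_mulVec,
        Matrix.dotProduct_mulVec, Matrix.mulVec_transpose]
    simpa [key] using h2

/-- Kinetic energy in extended momentum coordinates splits
into task-space and null-space parts: with `J̄ = [J; N]`
(`N = (Z M Zᵀ)⁻¹ Z M`), `B = J̄⁻¹`, and `π_e = J̄⁻ᵀ p = (π; π_ν)`, one has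
`(1/2) pᵀ M⁻¹ p = (1/2) π_eᵀ (J̄ M⁻¹ J̄ᵀ) π_e
             = (1/2) πᵀ Λ_t⁻¹ π + (1/2) π_νᵀ Λ_ν⁻¹ π_ν`,
where `Λ_t = (J M⁻¹ Jᵀ)⁻¹` and `Λ_ν = Z M Zᵀ`. -/
theorem kinetic_energy_extended_momentum_split
    {n m : ℕ} (hmn : m ≤ n)
    (M : Matrix (Fin n) (Fin n) ℝ) (J : Matrix (Fin m) (Fin n) ℝ)
    (Z : Matrix (Fin (n - m)) (Fin n) ℝ)
    (hM : M.PosDef) (hJ : J.rank = m)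
    (hZ : Z.rank = n - m) (hJZ : J * Zᵀ = 0)
    (B : Matrix (Fin n) (Fin m ⊕ Fin (n - m)) ℝ)
    (hB₁ : (fromRows J ((Z * M * Zᵀ)⁻¹ * Z * M)) * B =
        (1 : Matrix (Fin m ⊕ Fin (n - m)) (Fin m ⊕ Fin (n - m)) ℝ))
    (hB₂ : B * (fromRows J ((Z * M * Zᵀ)⁻¹ * Z * M)) =
        (1 : Matrix (Fin n) (Fin n) ℝ))
    (p : Fin n → ℝ) (πe : Fin m ⊕ Fin (n - m) → ℝ)
    (π : Fin m → ℝ) (πν : Fin (n - m) → ℝ)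
    (hπe : πe = Bᵀ.mulVec p)
    (hπ : π = fun i => πe (Sum.inl i))
    (hπν : πν = fun j => πe (Sum.inr j)) :
    (1 / 2 : ℝ) * (p ⬝ᵥ M⁻¹.mulVec p) =
      (1 / 2 : ℝ) * (πe ⬝ᵥ ((fromRows J ((Z * M * Zᵀ)⁻¹ * Z * M)) * M⁻¹ *
        (fromRows J ((Z * M * Zᵀ)⁻¹ * Z * M))ᵀ).mulVec πe) ∧
    (1 / 2 : ℝ) * (p ⬝ᵥ M⁻¹.mulVec p) =
      (1 / 2 : ℝ) * (π ⬝ᵥ ((J * M⁻¹ * Jᵀ)⁻¹)⁻¹.mulVec π) +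
      (1 / 2 : ℝ) * (πν ⬝ᵥ (Z * M * Zᵀ)⁻¹.mulVec πν) := by
  set N : Matrix (Fin (n - m)) (Fin n) ℝ := (Z * M * Zᵀ)⁻¹ * Z * M with hN
  set Jb : Matrix (Fin m ⊕ Fin (n - m)) (Fin n) ℝ := fromRows J N with hJb
  -- basic facts
  have hMt : Mᵀ = M := hM.isHermitian
  have hMdet : IsUnit M.det := hM.det_pos.ne'.isUnit
  have hZM : (Z * M * Zᵀ).PosDef := aux_posdef M Z hM hZ
  have hZMt : (Z * M * Zᵀ)ᵀ = Z * M * Zᵀ := hZM.isHermitian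
  have hZMdet : IsUnit (Z * M * Zᵀ).det := hZM.det_pos.ne'.isUnit
  have hJM : (J * M⁻¹ * Jᵀ).PosDef := aux_posdef M⁻¹ J hM.inv hJ
  have hJMdet : IsUnit (J * M⁻¹ * Jᵀ).det := hJM.det_pos.ne'.isUnit
  have hMinvM : M⁻¹ * M = 1 := Matrix.nonsing_inv_mul M hMdet
  -- transpose of N
  have hNt : Nᵀ = M * Zᵀ * (Z * M * Zᵀ)⁻¹ := by
    rw [hN, Matrix.transpose_mul, Matrix.transpose_mul, Matrix.transpose_nonsing_inv,
      hZMt, hMt]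
    simp only [Matrix.mul_assoc]
  -- block structure
  have hJN : J * M⁻¹ * Nᵀ = 0 := by
    rw [hNt]
    calc J * M⁻¹ * (M * Zᵀ * (Z * M * Zᵀ)⁻¹)
        = J * (M⁻¹ * M) * (Zᵀ * (Z * M * Zᵀ)⁻¹) := by
          simp only [Matrix.mul_assoc]
      _ = (J * Zᵀ) * (Z * M * Zᵀ)⁻¹ := by
          rw [hMinvM, Matrix.mul_one]; simp only [Matrix.mul_assoc]
      _ = 0 := by rw [hJZ, Matrix.zero_mul]
  have hZJ : Z * Jᵀ = 0 := by
    have := congrArg Matrix.transpose hJZ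
    simpa using this
  have hNJ : N * M⁻¹ * Jᵀ = 0 := by
    calc N * M⁻¹ * Jᵀ
        = (Z * M * Zᵀ)⁻¹ * (Z * ((M * M⁻¹) * Jᵀ)) := by
          simp only [hN, Matrix.mul_assoc]
      _ = (Z * M * Zᵀ)⁻¹ * (Z * Jᵀ) := by
          rw [Matrix.mul_nonsing_inv M hMdet, Matrix.one_mul]
      _ = 0 := by rw [hZJ, Matrix.mul_zero]
  have hNN : N * M⁻¹ * Nᵀ = (Z * M * Zᵀ)⁻¹ := by
    rw [hNt, hN]
    calc (Z * M * Zᵀ)⁻¹ * Z * M * M⁻¹ * (M * Zᵀ * (Z * M * Zᵀ)⁻¹)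
        = (Z * M * Zᵀ)⁻¹ * (Z * ((M * M⁻¹) * M) * Zᵀ) * (Z * M * Zᵀ)⁻¹ := by
          simp only [Matrix.mul_assoc]
      _ = (Z * M * Zᵀ)⁻¹ * (Z * M * Zᵀ) * (Z * M * Zᵀ)⁻¹ := by
          rw [Matrix.mul_nonsing_inv M hMdet, Matrix.one_mul]
      _ = (Z * M * Zᵀ)⁻¹ := by
          rw [Matrix.nonsing_inv_mul _ hZMdet, Matrix.one_mul]
  have hblock : Jb * M⁻¹ * Jbᵀ =
      fromBlocks (J * M⁻¹ * Jᵀ) 0 0 ((Z * M * Zᵀ)⁻¹) := by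
    rw [hJb, Matrix.transpose_fromRows, Matrix.fromRows_mul,
      Matrix.fromRows_mul_fromCols, hJN, hNJ, hNN]
  -- p = Jbᵀ πe
  have hp : Jbᵀ.mulVec πe = p := by
    rw [hπe, Matrix.mulVec_mulVec, ← Matrix.transpose_mul, hB₂]
    simp
  have hp2 : πe ᵥ* Jb = p := by rw [← Matrix.mulVec_transpose, hp]
  have hKE : p ⬝ᵥ M⁻¹.mulVec p = πe ⬝ᵥ (Jb * M⁻¹ * Jbᵀ).mulVec πe := by
    have h1 : (Jb * M⁻¹ * Jbᵀ).mulVec πe = Jb.mulVec (M⁻¹.mulVec p) := by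
      rw [← Matrix.mulVec_mulVec, ← Matrix.mulVec_mulVec, hp]
    conv_rhs => rw [h1, Matrix.dotProduct_mulVec, hp2]
  refine ⟨by rw [hKE], ?_⟩
  have hπe' : πe = Sum.elim π πν := by
    funext i; cases i <;> simp [hπ, hπν]
  rw [hKE, hblock, Matrix.nonsing_inv_nonsing_inv _ hJMdet, hπe',
    Matrix.fromBlocks_mulVec, sumElim_dotProduct_sumElim]
  simp [mul_add]
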